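/- For the open Toda lattice of dimension 2k+1 (k ≥ 1), both explicit bracket matrices define compatible Poisson structures: for every λ ∈ ℂ, the antisymmetric matrix of polynomials Π^{(λ)} := λΠ₁ + Π₂ satisfies the Jacobi (Schouten) identity, namely for all indices i, j, r ∈ {0, …, 2k} the polynomial identity Σ_{m=0}^{2k} ( Π^{(λ)}_{mi} · ∂Π^{(λ)}_{jr}/∂v_m + Π^{(λ)}_{mj} · ∂Π^{(λ)}_{ri}/∂v_m + Π^{(λ)}_{mr} · ∂Π^{(λ)}_{ij}/∂v_m ) = 0 holds in ℂ[v₀, …, v_{2k}]; the same identity also holds with Π^{(λ)} replaced by Π₁. -/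

import Mathlib

open Matrix MvPolynomial

set_option maxHeartbeats 1000000
set_option linter.unreachableTactic false
set_option linter.unusedTactic false
noncomputable section

/-- The first Toda bracket matrix `Π₁` of the `(2k+1)`-dimensional open Toda
lattice, with polynomial entries. -/
def toda1 (k : ℕ) : Matrix (Fin (2 * k + 1)) (Fin (2 * k + 1))
    (MvPolynomial (Fin (2 * k + 1)) ℂ) :=
  Matrix.of fun i j =>
    if j.val = i.val + 1 then (if Even i.val then -X j else -X i)
    else if i.val = j.val + 1 then (if Even j.val then X i else X j)
    else 0

/-- The second Toda bracket matrix `Π₂` of the `(2k+1)`-dimensional open Toda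
lattice, with polynomial entries. -/
def toda2 (k : ℕ) : Matrix (Fin (2 * k + 1)) (Fin (2 * k + 1))
    (MvPolynomial (Fin (2 * k + 1)) ℂ) :=
  Matrix.of fun i j =>
    if j.val = i.val + 1 then -(X i * X j)
    else if i.val = j.val + 1 then X i * X j
    else if h : j.val = i.val + 2 then
      (if Even i.val then
        -2 * (X (⟨i.val + 1, by have := j.isLt; omega⟩ : Fin (2 * k + 1))) ^ 2
       else C (-(1/2) : ℂ) * (X i * X j))
    else if h' : i.val = j.val + 2 then
      (if Even j.val then
        2 * (X (⟨j.val + 1, by have := i.isLt; omega⟩ : Fin (2 * k + 1))) ^ 2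
       else C ((1/2) : ℂ) * (X i * X j))
    else 0

namespace TodaProof
variable {k : ℕ}

/-- combined bracket -/
def P (k : ℕ) (lam : ℂ) (i j : Fin (2 * k + 1)) : MvPolynomial (Fin (2 * k + 1)) ℂ :=
  C lam * toda1 k i j + toda2 k i j

variable {lam : ℂ} {i j m : Fin (2 * k + 1)}

lemma P_up1_even (h : (j : ℕ) = (i : ℕ) + 1) (he : Even (i : ℕ)) :
    P k lam i j = -(C lam * X j) - X i * X j := by
  simp only [P, toda1, toda2, Matrix.of_apply, if_pos h, if_pos he]
  ring

lemma P_up1_odd (h : (j : ℕ) = (i : ℕ) + 1) (he : ¬ Even (i : ℕ)) :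
    P k lam i j = -(C lam * X i) - X i * X j := by
  simp only [P, toda1, toda2, Matrix.of_apply, if_pos h, if_neg he]
  ring

lemma P_down1_even (h : (i : ℕ) = (j : ℕ) + 1) (he : Even (j : ℕ)) :
    P k lam i j = C lam * X i + X i * X j := by
  have h2 : ¬ ((j:ℕ) = (i:ℕ) + 1) := by omega
  simp only [P, toda1, toda2, Matrix.of_apply, if_neg h2, if_pos h, if_pos he]

lemma P_down1_odd (h : (i : ℕ) = (j : ℕ) + 1) (he : ¬ Even (j : ℕ)) :
    P k lam i j = C lam * X j + X i * X j := by
  have h2 : ¬ ((j:ℕ) = (i:ℕ) + 1) := by omega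
  simp only [P, toda1, toda2, Matrix.of_apply, if_neg h2, if_pos h, if_neg he]

lemma P_up2_even (h : (j : ℕ) = (i : ℕ) + 2) (he : Even (i : ℕ)) :
    P k lam i j = -(C (2:ℂ) * X (⟨(i:ℕ) + 1, by have := j.isLt; omega⟩ : Fin (2*k+1)) ^ 2) := by
  have h1 : ¬ ((j:ℕ) = (i:ℕ) + 1) := by omega
  have h2 : ¬ ((i:ℕ) = (j:ℕ) + 1) := by omega
  simp only [P, toda1, toda2, Matrix.of_apply, if_neg h1, if_neg h2, dif_pos h, if_pos he]
  rw [show (C (2:ℂ) : MvPolynomial (Fin (2*k+1)) ℂ) = 2 from map_ofNat C 2]; ring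

lemma P_up2_odd (h : (j : ℕ) = (i : ℕ) + 2) (he : ¬ Even (i : ℕ)) :
    P k lam i j = C (-(1/2) : ℂ) * (X i * X j) := by
  have h1 : ¬ ((j:ℕ) = (i:ℕ) + 1) := by omega
  have h2 : ¬ ((i:ℕ) = (j:ℕ) + 1) := by omega
  simp only [P, toda1, toda2, Matrix.of_apply, if_neg h1, if_neg h2, dif_pos h, if_neg he]
  ring

lemma P_down2_even (h : (i : ℕ) = (j : ℕ) + 2) (he : Even (j : ℕ)) :
    P k lam i j = C (2:ℂ) * X (⟨(j:ℕ) + 1, by have := i.isLt; omega⟩ : Fin (2*k+1)) ^ 2 := by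
  have h1 : ¬ ((j:ℕ) = (i:ℕ) + 1) := by omega
  have h2 : ¬ ((i:ℕ) = (j:ℕ) + 1) := by omega
  have h3 : ¬ ((j:ℕ) = (i:ℕ) + 2) := by omega
  simp only [P, toda1, toda2, Matrix.of_apply, if_neg h1, if_neg h2, dif_neg h3, dif_pos h,
    if_pos he]
  rw [show (C (2:ℂ) : MvPolynomial (Fin (2*k+1)) ℂ) = 2 from map_ofNat C 2]; ring

lemma P_down2_odd (h : (i : ℕ) = (j : ℕ) + 2) (he : ¬ Even (j : ℕ)) :
    P k lam i j = C ((1/2) : ℂ) * (X i * X j) := by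
  have h1 : ¬ ((j:ℕ) = (i:ℕ) + 1) := by omega
  have h2 : ¬ ((i:ℕ) = (j:ℕ) + 1) := by omega
  have h3 : ¬ ((j:ℕ) = (i:ℕ) + 2) := by omega
  simp only [P, toda1, toda2, Matrix.of_apply, if_neg h1, if_neg h2, dif_neg h3, dif_pos h,
    if_neg he]
  ring

lemma P_zero (h1 : (j:ℕ) ≠ (i:ℕ) + 1) (h2 : (i:ℕ) ≠ (j:ℕ) + 1)
    (h3 : (j:ℕ) ≠ (i:ℕ) + 2) (h4 : (i:ℕ) ≠ (j:ℕ) + 2) :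
    P k lam i j = 0 := by
  simp only [P, toda1, toda2, Matrix.of_apply, if_neg h1, if_neg h2, dif_neg h3, dif_neg h4]
  ring

lemma P_diag : P k lam i i = 0 :=
  P_zero (by omega) (by omega) (by omega) (by omega)

lemma P_anti (i j : Fin (2*k+1)) : P k lam j i = - P k lam i j := by
  simp only [P, toda1, toda2, Matrix.of_apply]
  split_ifs <;> first | omega | (simp only [map_neg]; ring1) | ring1


lemma pderiv_X_of_val_ne {n : ℕ} {m t : Fin n} (h : (t:ℕ) ≠ (m:ℕ)) :
    pderiv m (X t : MvPolynomial (Fin n) ℂ) = 0 :=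
  pderiv_X_of_ne (Fin.ne_of_val_ne h)

lemma pi_single_of_val_ne {n : ℕ} {m t : Fin n} (h : (t:ℕ) ≠ (m:ℕ)) :
    Pi.single (M := fun _ => MvPolynomial (Fin n) ℂ) m 1 t = 0 :=
  Pi.single_eq_of_ne (Fin.ne_of_val_ne h) 1

lemma pderiv_two {n : ℕ} (m : Fin n) : pderiv m (2 : MvPolynomial (Fin n) ℂ) = 0 := by
  rw [show (2 : MvPolynomial (Fin n) ℂ) = C 2 from (map_ofNat C 2).symm, pderiv_C]

lemma pderiv_P_eq_zero {m i j : Fin (2*k+1)}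
    (h : (m:ℕ) < min (i:ℕ) (j:ℕ) ∨ max (i:ℕ) (j:ℕ) < (m:ℕ)) :
    pderiv m (P k lam i j) = 0 := by
  simp only [P, toda1, toda2, Matrix.of_apply]
  split_ifs <;>
    simp (disch := (try simp only [Fin.val_mk]); omega)
      [pderiv_X_of_val_ne, pi_single_of_val_ne, pderiv_two, pderiv_C_mul, pderiv_mul,
       pderiv_pow]

section windows
variable {M : Type*} [AddCommMonoid M]

lemma sum_eq_window {n : ℕ} (f : Fin n → M) (a c : ℕ) (hc : c < n)
    (hlo : ∀ m : Fin n, (m:ℕ) < a → f m = 0) (hhi : ∀ m : Fin n, c < (m:ℕ) → f m = 0) :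
    ∑ m, f m = ∑ t ∈ Finset.Icc a c, if h : t < n then f ⟨t, h⟩ else 0 := by
  classical
  have e1 : ∑ m, f m = ∑ t ∈ Finset.range n, if h : t < n then f ⟨t, h⟩ else 0 := by
    rw [← Fin.sum_univ_eq_sum_range (fun t => if h : t < n then f ⟨t, h⟩ else 0) n]
    exact Finset.sum_congr rfl fun m _ => by simp
  rw [e1]
  refine (Finset.sum_subset ?_ ?_).symm
  · intro t ht; simp only [Finset.mem_Icc] at ht; simp only [Finset.mem_range]; omega
  · intro t ht hnot
    simp only [Finset.mem_range] at ht; simp only [Finset.mem_Icc] at hnot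
    rw [dif_pos ht]
    rcases lt_or_ge t a with h | h
    · exact hlo ⟨t, ht⟩ h
    · exact hhi ⟨t, ht⟩ (show c < t by omega)

lemma Icc_expand2 (g : ℕ → M) (a : ℕ) :
    ∑ t ∈ Finset.Icc a (a+2), g t = g a + g (a+1) + g (a+2) := by
  rw [show a+2 = (a+1)+1 from rfl, Finset.sum_Icc_succ_top (by omega),
    Finset.sum_Icc_succ_top (by omega), Finset.Icc_self, Finset.sum_singleton]

lemma Icc_expand3 (g : ℕ → M) (a : ℕ) :
    ∑ t ∈ Finset.Icc a (a+3), g t = g a + g (a+1) + g (a+2) + g (a+3) := by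
  rw [show a+3 = (a+2)+1 from rfl, Finset.sum_Icc_succ_top (by omega), Icc_expand2]

lemma Icc_expand4 (g : ℕ → M) (a : ℕ) :
    ∑ t ∈ Finset.Icc a (a+4), g t = g a + g (a+1) + g (a+2) + g (a+3) + g (a+4) := by
  rw [show a+4 = (a+3)+1 from rfl, Finset.sum_Icc_succ_top (by omega), Icc_expand3]
end windows

lemma even_eq_mod (n : ℕ) : Even n = (n % 2 = 0) := propext Nat.even_iff

/-- one summand of the Jacobi sum -/
def Jterm (k : ℕ) (lam : ℂ) (i j r m : Fin (2*k+1)) : MvPolynomial (Fin (2*k+1)) ℂ :=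
  P k lam m i * pderiv m (P k lam j r) + P k lam m j * pderiv m (P k lam r i)
    + P k lam m r * pderiv m (P k lam i j)

def Jsum (k : ℕ) (lam : ℂ) (i j r : Fin (2*k+1)) : MvPolynomial (Fin (2*k+1)) ℂ :=
  ∑ m, Jterm k lam i j r m

lemma Jsum_swap12 (i j r : Fin (2*k+1)) : Jsum k lam j i r = - Jsum k lam i j r := by
  unfold Jsum Jterm
  rw [← Finset.sum_neg_distrib]
  refine Finset.sum_congr rfl fun m _ => ?_
  rw [P_anti r i, P_anti j r, P_anti i j]
  simp only [map_neg, mul_neg]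
  ring

lemma Jsum_swap23 (i j r : Fin (2*k+1)) : Jsum k lam i r j = - Jsum k lam i j r := by
  unfold Jsum Jterm
  rw [← Finset.sum_neg_distrib]
  refine Finset.sum_congr rfl fun m _ => ?_
  rw [P_anti r i, P_anti j r, P_anti i j]
  simp only [map_neg, mul_neg]
  ring

lemma Jsum_degen_left (i r : Fin (2*k+1)) : Jsum k lam i i r = 0 := by
  refine Finset.sum_eq_zero fun m _ => ?_
  unfold Jterm
  rw [P_diag, P_anti i r]
  simp only [map_neg, map_zero, mul_neg, mul_zero]
  ring

lemma Jsum_degen_right (i j : Fin (2*k+1)) : Jsum k lam i j j = 0 := by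
  refine Finset.sum_eq_zero fun m _ => ?_
  unfold Jterm
  rw [P_diag, P_anti i j]
  simp only [map_neg, map_zero, mul_neg, mul_zero]
  ring

lemma Jsum_degen_outer (i j : Fin (2*k+1)) : Jsum k lam i j i = 0 := by
  refine Finset.sum_eq_zero fun m _ => ?_
  unfold Jterm
  rw [P_diag, P_anti i j]
  simp only [map_neg, map_zero, mul_neg, mul_zero]
  ring

lemma Jsum_far1 {i j r : Fin (2*k+1)} (hij : (i:ℕ) + 2 < (j:ℕ)) (hjr : (j:ℕ) < (r:ℕ)) :
    Jsum k lam i j r = 0 := by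
  refine Finset.sum_eq_zero fun m _ => ?_
  have h1 : P k lam i j = 0 := P_zero (by omega) (by omega) (by omega) (by omega)
  have h2 : P k lam r i = 0 := P_zero (by omega) (by omega) (by omega) (by omega)
  unfold Jterm
  rcases lt_or_ge (m:ℕ) (j:ℕ) with hm | hm
  · have h3 : pderiv m (P k lam j r) = 0 := pderiv_P_eq_zero (by omega)
    simp [h1, h2, h3]
  · have h3 : P k lam m i = 0 := P_zero (by omega) (by omega) (by omega) (by omega)
    simp [h1, h2, h3]

lemma Jsum_far2 {i j r : Fin (2*k+1)} (hij : (i:ℕ) < (j:ℕ)) (hjr : (j:ℕ) + 2 < (r:ℕ)) :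
    Jsum k lam i j r = 0 := by
  refine Finset.sum_eq_zero fun m _ => ?_
  have h1 : P k lam j r = 0 := P_zero (by omega) (by omega) (by omega) (by omega)
  have h2 : P k lam r i = 0 := P_zero (by omega) (by omega) (by omega) (by omega)
  unfold Jterm
  rcases le_or_gt (m:ℕ) (j:ℕ) with hm | hm
  · have h3 : P k lam m r = 0 := P_zero (by omega) (by omega) (by omega) (by omega)
    simp [h1, h2, h3]
  · have h3 : pderiv m (P k lam i j) = 0 := pderiv_P_eq_zero (by omega)
    simp [h1, h2, h3]

lemma Jterm_outside {i j r : Fin (2*k+1)} (hij : (i:ℕ) < (j:ℕ)) (hjr : (j:ℕ) < (r:ℕ))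
    (m : Fin (2*k+1)) (hm : (m:ℕ) < (i:ℕ) ∨ (r:ℕ) < (m:ℕ)) : Jterm k lam i j r m = 0 := by
  have h1 : pderiv m (P k lam j r) = 0 := pderiv_P_eq_zero (by omega)
  have h2 : pderiv m (P k lam r i) = 0 := pderiv_P_eq_zero (by omega)
  have h3 : pderiv m (P k lam i j) = 0 := pderiv_P_eq_zero (by omega)
  unfold Jterm
  rw [h1, h2, h3]
  ring


lemma Jcase11 (a : ℕ) (ha : a + 2 < 2*k+1) :
    Jsum k lam ⟨a, by omega⟩ ⟨a+1, by omega⟩ ⟨a+2, ha⟩ = 0 := by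
  unfold Jsum
  rw [sum_eq_window _ a (a+2) (by omega)
      (fun m hm => Jterm_outside (show a < a+1 by omega) (show a+1 < a+2 by omega) m
        (Or.inl hm))
      (fun m hm => Jterm_outside (show a < a+1 by omega) (show a+1 < a+2 by omega) m
        (Or.inr hm)),
    Icc_expand2, dif_pos (show a < 2*k+1 by omega), dif_pos (show a+1 < 2*k+1 by omega), dif_pos ha]
  unfold Jterm
  rcases Nat.even_or_odd a with hpar | hpar
  · rw [Nat.even_iff] at hpar
    simp (disch := (try simp only [Fin.val_mk, even_eq_mod]); all_goals (try omega)) only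
      [P_up1_even, P_up1_odd, P_down1_even, P_down1_odd, P_up2_even, P_up2_odd,
       P_down2_even, P_down2_odd, P_zero, P_diag]
    simp [pderiv_mul, pderiv_pow, pderiv_two, pderiv_C_mul, Pi.single_apply, Fin.mk.injEq]
    all_goals (apply MvPolynomial.funext; intro x; simp; try ring)
  · rw [Nat.odd_iff] at hpar
    simp (disch := (try simp only [Fin.val_mk, even_eq_mod]); all_goals (try omega)) only
      [P_up1_even, P_up1_odd, P_down1_even, P_down1_odd, P_up2_even, P_up2_odd,
       P_down2_even, P_down2_odd, P_zero, P_diag]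
    simp [pderiv_mul, pderiv_pow, pderiv_two, pderiv_C_mul, Pi.single_apply, Fin.mk.injEq]
    all_goals (apply MvPolynomial.funext; intro x; simp; try ring)

lemma Jcase12 (a : ℕ) (ha : a + 3 < 2*k+1) :
    Jsum k lam ⟨a, by omega⟩ ⟨a+1, by omega⟩ ⟨a+3, ha⟩ = 0 := by
  unfold Jsum
  rw [sum_eq_window _ a (a+3) (by omega)
      (fun m hm => Jterm_outside (show a < a+1 by omega) (show a+1 < a+3 by omega) m
        (Or.inl hm))
      (fun m hm => Jterm_outside (show a < a+1 by omega) (show a+1 < a+3 by omega) m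
        (Or.inr hm)),
    Icc_expand3, dif_pos (show a < 2*k+1 by omega), dif_pos (show a+1 < 2*k+1 by omega), dif_pos (show a+2 < 2*k+1 by omega), dif_pos ha]
  unfold Jterm
  rcases Nat.even_or_odd a with hpar | hpar
  · rw [Nat.even_iff] at hpar
    simp (disch := (try simp only [Fin.val_mk, even_eq_mod]); all_goals (try omega)) only
      [P_up1_even, P_up1_odd, P_down1_even, P_down1_odd, P_up2_even, P_up2_odd,
       P_down2_even, P_down2_odd, P_zero, P_diag]
    simp [pderiv_mul, pderiv_pow, pderiv_two, pderiv_C_mul, Pi.single_apply, Fin.mk.injEq]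
    all_goals (apply MvPolynomial.funext; intro x; simp; try ring)
  · rw [Nat.odd_iff] at hpar
    simp (disch := (try simp only [Fin.val_mk, even_eq_mod]); all_goals (try omega)) only
      [P_up1_even, P_up1_odd, P_down1_even, P_down1_odd, P_up2_even, P_up2_odd,
       P_down2_even, P_down2_odd, P_zero, P_diag]
    simp [pderiv_mul, pderiv_pow, pderiv_two, pderiv_C_mul, Pi.single_apply, Fin.mk.injEq]
    all_goals (apply MvPolynomial.funext; intro x; simp; try ring)

lemma Jcase21 (a : ℕ) (ha : a + 3 < 2*k+1) :
    Jsum k lam ⟨a, by omega⟩ ⟨a+2, by omega⟩ ⟨a+3, ha⟩ = 0 := by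
  unfold Jsum
  rw [sum_eq_window _ a (a+3) (by omega)
      (fun m hm => Jterm_outside (show a < a+2 by omega) (show a+2 < a+3 by omega) m
        (Or.inl hm))
      (fun m hm => Jterm_outside (show a < a+2 by omega) (show a+2 < a+3 by omega) m
        (Or.inr hm)),
    Icc_expand3, dif_pos (show a < 2*k+1 by omega), dif_pos (show a+1 < 2*k+1 by omega), dif_pos (show a+2 < 2*k+1 by omega), dif_pos ha]
  unfold Jterm
  rcases Nat.even_or_odd a with hpar | hpar
  · rw [Nat.even_iff] at hpar
    simp (disch := (try simp only [Fin.val_mk, even_eq_mod]); all_goals (try omega)) only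
      [P_up1_even, P_up1_odd, P_down1_even, P_down1_odd, P_up2_even, P_up2_odd,
       P_down2_even, P_down2_odd, P_zero, P_diag]
    simp [pderiv_mul, pderiv_pow, pderiv_two, pderiv_C_mul, Pi.single_apply, Fin.mk.injEq]
    all_goals (apply MvPolynomial.funext; intro x; simp; try ring)
  · rw [Nat.odd_iff] at hpar
    simp (disch := (try simp only [Fin.val_mk, even_eq_mod]); all_goals (try omega)) only
      [P_up1_even, P_up1_odd, P_down1_even, P_down1_odd, P_up2_even, P_up2_odd,
       P_down2_even, P_down2_odd, P_zero, P_diag]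
    simp [pderiv_mul, pderiv_pow, pderiv_two, pderiv_C_mul, Pi.single_apply, Fin.mk.injEq]
    all_goals (apply MvPolynomial.funext; intro x; simp; try ring)

lemma Jcase22 (a : ℕ) (ha : a + 4 < 2*k+1) :
    Jsum k lam ⟨a, by omega⟩ ⟨a+2, by omega⟩ ⟨a+4, ha⟩ = 0 := by
  unfold Jsum
  rw [sum_eq_window _ a (a+4) (by omega)
      (fun m hm => Jterm_outside (show a < a+2 by omega) (show a+2 < a+4 by omega) m
        (Or.inl hm))
      (fun m hm => Jterm_outside (show a < a+2 by omega) (show a+2 < a+4 by omega) m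
        (Or.inr hm)),
    Icc_expand4, dif_pos (show a < 2*k+1 by omega), dif_pos (show a+1 < 2*k+1 by omega), dif_pos (show a+2 < 2*k+1 by omega), dif_pos (show a+3 < 2*k+1 by omega), dif_pos ha]
  unfold Jterm
  rcases Nat.even_or_odd a with hpar | hpar
  · rw [Nat.even_iff] at hpar
    simp (disch := (try simp only [Fin.val_mk, even_eq_mod]); all_goals (try omega)) only
      [P_up1_even, P_up1_odd, P_down1_even, P_down1_odd, P_up2_even, P_up2_odd,
       P_down2_even, P_down2_odd, P_zero, P_diag]
    simp [pderiv_mul, pderiv_pow, pderiv_two, pderiv_C_mul, Pi.single_apply, Fin.mk.injEq]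
    all_goals (apply MvPolynomial.funext; intro x; simp; try ring)
  · rw [Nat.odd_iff] at hpar
    simp (disch := (try simp only [Fin.val_mk, even_eq_mod]); all_goals (try omega)) only
      [P_up1_even, P_up1_odd, P_down1_even, P_down1_odd, P_up2_even, P_up2_odd,
       P_down2_even, P_down2_odd, P_zero, P_diag]
    simp [pderiv_mul, pderiv_pow, pderiv_two, pderiv_C_mul, Pi.single_apply, Fin.mk.injEq]
    all_goals (apply MvPolynomial.funext; intro x; simp; try ring)

lemma Jsum_sorted {i j r : Fin (2*k+1)} (h1 : (i:ℕ) < (j:ℕ)) (h2 : (j:ℕ) < (r:ℕ)) :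
    Jsum k lam i j r = 0 := by
  rcases i with ⟨a, ha⟩; rcases j with ⟨b, hb⟩; rcases r with ⟨c, hc⟩
  have h1' : a < b := h1
  have h2' : b < c := h2
  rcases Nat.lt_or_ge b (a+3) with hj | hj
  · rcases (show b = a+1 ∨ b = a+2 by omega) with hb1 | hb2
    · subst hb1
      rcases Nat.lt_or_ge c (a+4) with hr | hr
      · rcases (show c = a+2 ∨ c = a+3 by omega) with hc1 | hc1
        · subst hc1; exact Jcase11 a hc
        · subst hc1; exact Jcase12 a hc
      · exact Jsum_far2 (show a < a+1 by omega) (show (a+1)+2 < c by omega)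
    · subst hb2
      rcases Nat.lt_or_ge c (a+5) with hr | hr
      · rcases (show c = a+3 ∨ c = a+4 by omega) with hc1 | hc1
        · subst hc1; exact Jcase21 a hc
        · subst hc1; exact Jcase22 a hc
      · exact Jsum_far2 (show a < a+2 by omega) (show (a+2)+2 < c by omega)
  · exact Jsum_far1 (show a+2 < b by omega) h2'

lemma Jsum_zero (i j r : Fin (2*k+1)) : Jsum k lam i j r = 0 := by
  rcases Nat.lt_trichotomy ((i:ℕ)) ((j:ℕ)) with h1 | h1 | h1
  · rcases Nat.lt_trichotomy ((j:ℕ)) ((r:ℕ)) with h2 | h2 | h2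
    · exact Jsum_sorted h1 h2
    · obtain rfl : r = j := Fin.ext h2.symm
      exact Jsum_degen_right _ _
    · rcases Nat.lt_trichotomy ((i:ℕ)) ((r:ℕ)) with h3 | h3 | h3
      · rw [Jsum_swap23 i r j, Jsum_sorted h3 h2, neg_zero]
      · obtain rfl : r = i := Fin.ext h3.symm
        exact Jsum_degen_outer _ _
      · rw [Jsum_swap23 i r j, Jsum_swap12 r i j, Jsum_sorted h3 h1]; simp
  · obtain rfl : j = i := Fin.ext h1.symm
    exact Jsum_degen_left _ _
  · rcases Nat.lt_trichotomy ((i:ℕ)) ((r:ℕ)) with h2 | h2 | h2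
    · rw [Jsum_swap12 j i r, Jsum_sorted h1 h2, neg_zero]
    · obtain rfl : r = i := Fin.ext h2.symm
      exact Jsum_degen_outer _ _
    · rcases Nat.lt_trichotomy ((j:ℕ)) ((r:ℕ)) with h3 | h3 | h3
      · rw [Jsum_swap12 j i r, Jsum_swap23 j r i, Jsum_sorted h3 h2]; simp
      · obtain rfl : r = j := Fin.ext h3.symm
        exact Jsum_degen_right _ _
      · rw [Jsum_swap12 j i r, Jsum_swap23 j r i, Jsum_swap12 r j i, Jsum_sorted h3 h1]; simp

end TodaProof

/-- the open Toda brackets are compatible Poisson structures: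
`λΠ₁ + Π₂` satisfies the Schouten–Jacobi identity for every `λ`, and so does
`Π₁`. -/
theorem toda_brackets_jacobi (k : ℕ) (hk : 1 ≤ k) :
    (∀ (lam : ℂ) (i j r : Fin (2 * k + 1)),
        ∑ m : Fin (2 * k + 1),
          ((C lam * toda1 k m i + toda2 k m i)
              * pderiv m (C lam * toda1 k j r + toda2 k j r)
            + (C lam * toda1 k m j + toda2 k m j)
              * pderiv m (C lam * toda1 k r i + toda2 k r i)
            + (C lam * toda1 k m r + toda2 k m r)
              * pderiv m (C lam * toda1 k i j + toda2 k i j)) = 0) ∧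
    (∀ i j r : Fin (2 * k + 1),
        ∑ m : Fin (2 * k + 1),
          (toda1 k m i * pderiv m (toda1 k j r)
            + toda1 k m j * pderiv m (toda1 k r i)
            + toda1 k m r * pderiv m (toda1 k i j)) = 0) := by
  constructor
  · intro lam i j r
    exact TodaProof.Jsum_zero i j r
  · intro i j r
    have key : (2 : MvPolynomial (Fin (2 * k + 1)) ℂ) *
        (∑ m : Fin (2 * k + 1),
          (toda1 k m i * pderiv m (toda1 k j r)
            + toda1 k m j * pderiv m (toda1 k r i)
            + toda1 k m r * pderiv m (toda1 k i j)))
        = TodaProof.Jsum k 1 i j r + TodaProof.Jsum k (-1) i j r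
            - 2 * TodaProof.Jsum k 0 i j r := by
      unfold TodaProof.Jsum TodaProof.Jterm TodaProof.P
      rw [Finset.mul_sum, Finset.mul_sum, ← Finset.sum_add_distrib, ← Finset.sum_sub_distrib]
      refine Finset.sum_congr rfl fun m _ => ?_
      simp only [_root_.map_one, _root_.map_zero, _root_.map_neg, one_mul, neg_mul, zero_mul, zero_add, _root_.map_add]
      ring
    rw [TodaProof.Jsum_zero, TodaProof.Jsum_zero, TodaProof.Jsum_zero] at key
    have h2 : (2 : MvPolynomial (Fin (2 * k + 1)) ℂ) ≠ 0 := two_ne_zero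
    have key2 : (2 : MvPolynomial (Fin (2 * k + 1)) ℂ) *
        (∑ m : Fin (2 * k + 1),
          (toda1 k m i * pderiv m (toda1 k j r)
            + toda1 k m j * pderiv m (toda1 k r i)
            + toda1 k m r * pderiv m (toda1 k i j)))
        = 2 * 0 := by rw [key]; ring
    exact mul_left_cancel₀ h2 key2
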